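/- Curvature of the B-field-deformed connection: in a local frame with ∇_i = ∂_i + A_i and deformed operator D_i = ∂_i + A_i − b_{ij} ad(x^j) acting on partial differential operators (where ad(x^j) is the derivation with ad(x^j)(∂_k) = −δ^j_k, extended as a derivation), the commutator [D_i, D_k] equals (dA + b)_{ik} acting by the adjoint action minus (db)_{ikp} ad(x^p); i.e., the curvature 2-form is F̃ − i_p(db) ad(x^p) with F̃ = dA + b. -/

import Mathlib

/-- Curvature of the B-field-deformed connection on (order ≤ 1) partial differential
operators.  Functions form a commutative algebra `R` with commuting derivations
`δ i = ∂_i`; an order ≤ 1 pdo is a pair `(a, c)` representing `a + Σ_k c k ∂_k`;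
`ad(x^j)(a, c) = (−c j, 0)`, and the adjoint action of the connection `∇_i = ∂_i + A i`
on a pdo is `(a, c) ↦ (∂_i a − Σ_k c k ∂_k(A i), ∂_i c)`.  The deformed covariant
derivative is `D_i = ∂_i + A_i − b_{ij} ad(x^j)`.  Then
`[D_i, D_k] = ad_{(dA+b)_{ik}} − (db)_{ikp} ad(x^p)`, i.e. the curvature is
`F̃ − i_p(db) ad(x^p)` with `F̃ = dA + b`. -/
theorem deformed_connection_curvature
    {R : Type*} [CommRing R] [Algebra ℝ R] (n : ℕ)
    (δ : Fin n → (R →ₗ[ℝ] R))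
    (hLeib : ∀ i (a c : R), δ i (a * c) = a * δ i c + δ i a * c)
    (hδcomm : ∀ i j (a : R), δ i (δ j a) = δ j (δ i a))
    (Av : Fin n → R) (bm : Fin n → Fin n → R)
    (hbanti : ∀ i j, bm i j = -bm j i) :
    let D : Fin n → (R × (Fin n → R)) → (R × (Fin n → R)) := fun i P =>
      (δ i P.1 - (∑ k, P.2 k * δ k (Av i)) + ∑ j, bm i j * P.2 j,
       fun k => δ i (P.2 k))
    ∀ (i k : Fin n) (a : R) (c : Fin n → R),
      D i (D k (a, c)) - D k (D i (a, c))
        = (∑ p, (δ i (bm k p) + δ k (bm p i) + δ p (bm i k)) * c p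
             - ∑ p, c p * δ p (δ i (Av k) - δ k (Av i) + bm i k),
           fun _ => 0) := by
  intro D i k a c
  have hD : ∀ P, D i (D k P) - D k (D i P)
      = (δ i ((D k P).1) - (∑ m, δ k (P.2 m) * δ m (Av i)) + ∑ j, bm i j * δ k (P.2 j)
          - (δ k ((D i P).1) - (∑ m, δ i (P.2 m) * δ m (Av k)) + ∑ j, bm k j * δ i (P.2 j)),
         fun m => δ i (δ k (P.2 m)) - δ k (δ i (P.2 m))) := fun P => rfl
  rw [hD]
  refine Prod.ext ?_ (funext fun m => by simp [hδcomm])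
  simp only [D]
  have hb : ∀ p, δ k (bm p i) = - δ k (bm i p) := fun p => by rw [hbanti p i, map_neg]
  simp only [map_sub, map_add, map_sum, hLeib, Finset.sum_add_distrib,
    Finset.sum_sub_distrib, hδcomm, hb, add_mul, sub_mul, neg_mul, mul_neg, mul_sub, mul_add,
    Finset.sum_neg_distrib, mul_comm]
  abel
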